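/- Let z ∈ ℂ be a nonreal root of X³ − X² − X − 1 (i.e. z³ = z² + z + 1 and z ∉ ℝ). Then z/|z| is not a root of unity: there is no integer n ≥ 1 with (z/|z|)^n = 1. Consequently the argument θ of z is not a rational multiple of π. -/

import Mathlib

open Real

def trib : ℕ → ℤ × ℤ × ℤ
  | 0 => (1, 0, 0)
  | n+1 => ((trib n).2.2, (trib n).1 + (trib n).2.2, (trib n).2.1 + (trib n).2.2)

lemma trib_spec (w : ℂ) (hw : w ^ 3 = w ^ 2 + w + 1) (n : ℕ) :
    w ^ n = ((trib n).1 : ℂ) + (trib n).2.1 * w + (trib n).2.2 * w ^ 2 := by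
  induction n with
  | zero => simp [trib]
  | succ n ih =>
    rw [pow_succ, ih, trib]
    push_cast
    linear_combination ((trib n).2.2 : ℂ) * hw

lemma no_rat_root (r : ℚ) (hc : 4 * r ^ 3 - 4 * r ^ 2 + 1 = 0) : False := by
  set n := r.num with hn
  set d := (r.den : ℤ) with hd
  have hd0 : (0:ℤ) < d := by rw [hd]; exact_mod_cast r.pos
  have hrd : (n : ℚ) / (d : ℚ) = r := by exact_mod_cast Rat.num_div_den r
  have hdq : (d : ℚ) ≠ 0 := by positivity
  have key : 4 * n ^ 3 - 4 * n ^ 2 * d + d ^ 3 = 0 := by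
    have h2 : (4 * (n:ℚ) ^ 3 - 4 * (n:ℚ) ^ 2 * d + (d:ℚ) ^ 3) * d ^ 2 = 0 := by
      rw [← hrd] at hc
      field_simp at hc
      linear_combination (d:ℚ) ^ 2 * hc
    rcases mul_eq_zero.mp h2 with h | h
    · exact_mod_cast h
    · exact absurd h (by positivity)
  have hcop : IsCoprime n d := by
    rw [Int.isCoprime_iff_gcd_eq_one]
    exact_mod_cast r.reduced
  have hdvd : d ∣ 4 := by
    have h1 : d ∣ 4 * n ^ 3 := ⟨4 * n ^ 2 - d ^ 2, by linarith⟩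
    exact (hcop.pow_left).symm.dvd_of_dvd_mul_right h1
  have hgcd : Int.gcd n d = 1 := Int.isCoprime_iff_gcd_eq_one.mp hcop
  have hd4 : d = 1 ∨ d = 2 ∨ d = 4 := by
    have h4 : d ≤ 4 := Int.le_of_dvd (by norm_num) hdvd
    interval_cases d <;> omega
  have h2n : (2:ℤ) ∣ n → (2:ℤ) ∣ d → False := by
    intro h1 h2
    have : (2:ℤ) ∣ Int.gcd n d := Int.dvd_coe_gcd h1 h2
    rw [hgcd] at this
    norm_num at this
  rcases hd4 with h | h | h
  · rw [h] at key
    have : (4:ℤ) ∣ 1 := ⟨n ^ 2 - n ^ 3, by linarith⟩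
    norm_num at this
  · rw [h] at key
    have h3 : (2:ℤ) ∣ n ^ 3 := ⟨n ^ 2 - 1, by linarith⟩
    exact h2n (Int.prime_two.dvd_of_dvd_pow h3) (by rw [h])
  · rw [h] at key
    have h3 : (2:ℤ) ∣ n ^ 3 := ⟨2 * n ^ 2 - 8, by linarith⟩
    exact h2n (Int.prime_two.dvd_of_dvd_pow h3) (by rw [h]; exact ⟨2, rfl⟩)

/-- If `z` is a nonreal root of the Tribonacci polynomial `X³ - X² - X - 1`, then `z/|z|` is not
a root of unity, and consequently the argument of `z` is not a rational multiple of `π`. -/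
theorem tribonacci_root_not_root_of_unity (z : ℂ)
    (hz : z ^ 3 = z ^ 2 + z + 1)
    (hnotreal : ¬ ∃ x : ℝ, z = (x : ℂ)) :
    (∀ n : ℕ, 1 ≤ n → (z / (‖z‖ : ℂ)) ^ n ≠ 1) ∧
    (∀ q : ℚ, z.arg ≠ (q : ℝ) * π) := by
  have hy : z.im ≠ 0 := by
    intro h
    exact hnotreal ⟨z.re, Complex.ext rfl (by simpa using h)⟩
  have hz0 : z ≠ 0 := fun h => hy (by simp [h])
  -- the basic real equations for x = z.re, y = z.im
  have hz' := hz
  rw [Complex.ext_iff] at hz'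
  simp [pow_succ, Complex.mul_re, Complex.mul_im, Complex.add_re, Complex.add_im] at hz'
  obtain ⟨h1, h2⟩ := hz'
  have hyy : z.im ^ 2 = 3 * z.re ^ 2 - 2 * z.re - 1 := by
    have h2' : z.im * (3 * z.re ^ 2 - z.im ^ 2 - 2 * z.re - 1) = 0 := by linear_combination h2
    rcases mul_eq_zero.mp h2' with h | h
    · exact absurd h hy
    · linarith
  have hcube : 4 * z.re ^ 3 - 4 * z.re ^ 2 + 1 = 0 := by
    nlinarith [h1, hyy, sq_nonneg z.im]
  have hy2 : 0 < z.im ^ 2 := by positivity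
  -- bounds on x
  have hxlb : -1/2 < z.re := by
    by_contra h
    push_neg at h
    nlinarith [sq_nonneg (2*z.re+1), sq_nonneg z.re, sq_nonneg (z.re-1)]
  have hxub : z.re < -1/3 := by
    by_contra h
    push_neg at h
    nlinarith [sq_nonneg (2*z.re+1), sq_nonneg z.re, sq_nonneg (z.re-1), sq_nonneg (3*z.re+1)]
  -- |z| < 1
  have habs0 : 0 < ‖z‖ := norm_pos_iff.mpr hz0
  have habs1 : ‖z‖ < 1 := by
    have hsq : (‖z‖) ^ 2 < 1 := by
      rw [Complex.sq_norm, Complex.normSq_apply]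
      nlinarith
    nlinarith
  have main : ∀ n : ℕ, 1 ≤ n → (z / (‖z‖ : ℂ)) ^ n ≠ 1 := by
    intro n hn hpow
    have habsC : ((‖z‖ : ℂ)) ≠ 0 := by
      exact_mod_cast habs0.ne'
    have hzn : z ^ n = ((‖z‖ ^ n : ℝ) : ℂ) := by
      rw [div_pow, div_eq_one_iff_eq (pow_ne_zero _ habsC)] at hpow
      rw [hpow]
      push_cast
      ring
    have hspec := trib_spec z hz n
    obtain ⟨⟨a, b, c⟩, ht⟩ : ∃ t, trib n = t := ⟨_, rfl⟩
    rw [ht] at hspec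
    simp only at hspec
    rw [hzn] at hspec
    obtain ⟨w, hw⟩ : ∃ w : ℝ, ‖z‖ ^ n = w := ⟨_, rfl⟩
    rw [hw] at hspec
    have him : 0 = (b:ℝ) * z.im + (c:ℝ) * (z.re * z.im + z.im * z.re) := by
      have := congrArg Complex.im hspec
      simpa [pow_succ, Complex.mul_im, Complex.mul_re, Complex.add_im] using this
    have hre : w =
        (a:ℝ) + (b:ℝ) * z.re + (c:ℝ) * (z.re * z.re - z.im * z.im) := by
      have := congrArg Complex.re hspec
      simpa [pow_succ, Complex.mul_im, Complex.mul_re, Complex.add_re] using this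
    have hlin : (b:ℝ) + 2 * (c:ℝ) * z.re = 0 := by
      have h' : z.im * ((b:ℝ) + 2 * (c:ℝ) * z.re) = 0 := by linear_combination -him
      rcases mul_eq_zero.mp h' with h | h
      · exact absurd h hy
      · exact h
    by_cases hc0 : c = 0
    · have hb0' : b = 0 := by
        have : (b:ℝ) = 0 := by
          rw [hc0] at hlin
          push_cast at hlin
          linarith
        exact_mod_cast this
      rw [hc0, hb0'] at hre
      norm_num at hre
      have hpos : (0:ℝ) < ‖z‖ ^ n := pow_pos habs0 n
      have hlt : ‖z‖ ^ n < 1 :=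
        pow_lt_one₀ habs0.le habs1 (by omega)
      rw [hw] at hpos hlt
      rw [hre] at hpos hlt
      have ha1 : (0:ℤ) < a := by exact_mod_cast hpos
      have ha2 : a < 1 := by exact_mod_cast hlt
      omega
    · -- z.re would be rational, contradicting no_rat_root
      have hcR : (c:ℝ) ≠ 0 := by exact_mod_cast hc0
      set q : ℚ := -(b:ℚ) / (2 * c) with hq
      have hqx : (q:ℝ) = z.re := by
        rw [hq]
        push_cast
        rw [div_eq_iff (by simpa using hcR : (2 * (c:ℝ)) ≠ 0)]
        linear_combination -hlin
      apply no_rat_root q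
      have : ((4 * q ^ 3 - 4 * q ^ 2 + 1 : ℚ) : ℝ) = 0 := by
        push_cast
        rw [hqx]
        exact hcube
      exact_mod_cast this
  refine ⟨main, ?_⟩
  intro q hq
  apply main (2 * q.den) (by have := q.pos; omega)
  have hdiv : z / (‖z‖ : ℂ) = Complex.exp (z.arg * Complex.I) := by
    rw [div_eq_iff (by exact_mod_cast habs0.ne' : ((‖z‖ : ℂ)) ≠ 0), mul_comm]
    exact (Complex.norm_mul_exp_arg_mul_I z).symm
  rw [hdiv, ← Complex.exp_nat_mul]
  have hnd : (q:ℝ) * q.den = q.num := by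
    rw [Rat.cast_def]
    field_simp
  have hR : ((2 * q.den : ℕ) : ℝ) * z.arg = (q.num : ℝ) * (2 * π) := by
    rw [hq]
    push_cast
    linear_combination 2 * π * hnd
  have harg : ((2 * q.den : ℕ) : ℂ) * ((z.arg : ℂ) * Complex.I)
      = (q.num : ℂ) * (2 * (π:ℂ) * Complex.I) := by
    calc ((2 * q.den : ℕ) : ℂ) * ((z.arg : ℂ) * Complex.I)
        = ((((2 * q.den : ℕ) : ℝ) * z.arg : ℝ) : ℂ) * Complex.I := by push_cast; ring
      _ = (q.num : ℂ) * (2 * (π:ℂ) * Complex.I) := by rw [hR]; push_cast; ring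
  rw [harg]
  exact Complex.exp_int_mul_two_pi_mul_I q.num
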